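/- Under Assumption 1, the causal coefficient solves the unpaired moment equation in the limit of many instruments: the limit Q_Y := lim_{m→∞} m·Cov(Ĩ,X̃)ᵀ Cov(I,Y) exists and equals Q β*, where Q := lim_{m→∞} m·Cov(Ĩ,X̃)ᵀ Cov(Ĩ,X̃); consequently β* belongs to the set S_∞ := {β ∈ ℝ^d : Qβ = Q_Y}. -/

import Mathlib

open MeasureTheory ProbabilityTheory Filter Matrix
open scoped Topology NNReal ENNReal

noncomputable section

/-- Cross-covariance matrix of two centered random vectors (equal to `E[U Vᵀ]`
for centered `U, V`). -/
def covMat {Ω : Type*} [MeasurableSpace Ω] (μ : Measure Ω) {ι κ : Type*}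
    [Fintype ι] [Fintype κ] (U : Ω → ι → ℝ) (V : Ω → κ → ℝ) : Matrix ι κ ℝ :=
  Matrix.of fun i j => ∫ ω, U ω i * V ω j ∂μ

/-- Cross-covariance vector of a centered random vector and a centered
random variable. -/
def covVec {Ω : Type*} [MeasurableSpace Ω] (μ : Measure Ω) {ι : Type*}
    [Fintype ι] (U : Ω → ι → ℝ) (Y : Ω → ℝ) : ι → ℝ :=
  fun i => ∫ ω, U ω i * Y ω ∂μ

/-- Variance (covariance) matrix of a random vector. -/
def varMat {Ω : Type*} [MeasurableSpace Ω] (μ : Measure Ω) {ι : Type*} [Fintype ι]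
    (Z : Ω → ι → ℝ) : Matrix ι ι ℝ :=
  Matrix.of fun i j =>
    ∫ ω, Z ω i * Z ω j ∂μ - (∫ ω, Z ω i ∂μ) * (∫ ω, Z ω j ∂μ)

/-- Euclidean (ℓ2) norm of a finite-dimensional real vector. -/
def norm2 {ι : Type*} [Fintype ι] (v : ι → ℝ) : ℝ := Real.sqrt (∑ i, v i ^ 2)

/-- ℓ0 "norm": number of nonzero entries. -/
def sparsity {ι : Type*} [Fintype ι] (v : ι → ℝ) : ℕ :=
  (Finset.univ.filter fun i => v i ≠ 0).card

/-- ℓ2 → ℓ2 operator norm of a real matrix. -/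
def opNorm {ι κ : Type*} [Fintype ι] [Fintype κ] (A : Matrix ι κ ℝ) : ℝ :=
  sSup {y : ℝ | ∃ x : κ → ℝ, norm2 x ≤ 1 ∧ y = norm2 (A *ᵥ x)}

/-- Under Assumption 1, in the high-dimensional instrument limit the
limit `Q_Y := lim_m m · Cov(Ĩ,X̃)ᵀ Cov(I,Y)` exists, equals `Q β*`, and consequently
`β*` belongs to `S_∞ = {β : Q β = Q_Y}`. -/
theorem stmt_0
    (d : ℕ) (βstar : Fin d → ℝ)
    (Ω : ℕ → Type) [mΩ : ∀ m, MeasurableSpace (Ω m)]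
    (μ : ∀ m, Measure (Ω m)) (hprob : ∀ m, IsProbabilityMeasure (μ m))
    (I : ∀ m, Ω m → Fin m → ℝ) (X : ∀ m, Ω m → Fin d → ℝ)
    (Y : ∀ m, Ω m → ℝ) (ε : ∀ m, Ω m → ℝ)
    (It : ∀ m, Ω m → Fin m → ℝ) (Xt : ∀ m, Ω m → Fin d → ℝ)
    -- measurability and finite second moments
    (hImeas : ∀ m, Measurable (I m))
    (hI2 : ∀ m i, MemLp (fun ω => I m ω i) 2 (μ m))
    (hX2 : ∀ m j, MemLp (fun ω => X m ω j) 2 (μ m))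
    (hIt2 : ∀ m i, MemLp (fun ω => It m ω i) 2 (μ m))
    (hXt2 : ∀ m j, MemLp (fun ω => Xt m ω j) 2 (μ m))
    (hY2 : ∀ m, MemLp (Y m) 2 (μ m))
    (hε2 : ∀ m, MemLp (ε m) 2 (μ m))
    -- all variables are centered
    (hIc : ∀ m i, ∫ ω, I m ω i ∂(μ m) = 0)
    (hXc : ∀ m j, ∫ ω, X m ω j ∂(μ m) = 0)
    (hItc : ∀ m i, ∫ ω, It m ω i ∂(μ m) = 0)
    (hXtc : ∀ m j, ∫ ω, Xt m ω j ∂(μ m) = 0)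
    (hYc : ∀ m, ∫ ω, Y m ω ∂(μ m) = 0)
    -- structural model Y = Xᵀβ* + ε
    (hmodel : ∀ m ω, Y m ω = (∑ j, X m ω j * βstar j) + ε m ω)
    -- Assumption 1 (i): Cov(Ĩ,X̃) = Cov(I,X)
    (hcov : ∀ m, covMat (μ m) (It m) (Xt m) = covMat (μ m) (I m) (X m))
    -- Assumption 1 (ii): E[ε | I] = 0
    (hexo : ∀ m, (μ m)[ε m | MeasurableSpace.comap (I m) inferInstance] =ᵐ[μ m] 0)
    -- the limit Q is assumed to exist
    (Q : Matrix (Fin d) (Fin d) ℝ)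
    (hQ : Tendsto
      (fun (m : ℕ) => (m : ℝ) • ((covMat (μ m) (It m) (Xt m))ᵀ * covMat (μ m) (It m) (Xt m)))
      atTop (𝓝 Q)) :
    ∃ QY : Fin d → ℝ,
      Tendsto
        (fun (m : ℕ) => (m : ℝ) • ((covMat (μ m) (It m) (Xt m))ᵀ *ᵥ covVec (μ m) (I m) (Y m)))
        atTop (𝓝 QY)
      ∧ QY = Q *ᵥ βstar
      ∧ βstar ∈ {β : Fin d → ℝ | Q *ᵥ β = QY} := by
  classical
  haveI := hprob
  -- Step 1: E[I_i ε] = 0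
  have hIε : ∀ m i, ∫ ω, I m ω i * ε m ω ∂(μ m) = 0 := by
    intro m i
    set mI := MeasurableSpace.comap (I m) inferInstance with hmI
    have hle : mI ≤ mΩ m := (hImeas m).comap_le
    have hImI : StronglyMeasurable[mI] fun ω => I m ω i := by
      have : Measurable[mI] (I m) := Measurable.of_comap_le le_rfl
      exact ((measurable_pi_apply i).comp this).stronglyMeasurable
    have hεint : Integrable (ε m) (μ m) := (hε2 m).integrable one_le_two
    have hprod : Integrable ((fun ω => I m ω i) * ε m) (μ m) := by
      have := ((hε2 m).smul (hI2 m i)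
        (p := 2) (q := 2) (r := 1) (hpqr := ⟨by norm_num [ENNReal.inv_two_add_inv_two]⟩)).integrable le_rfl
      simpa [smul_eq_mul] using this
    have h1 := condExp_mul_of_stronglyMeasurable_left (μ := μ m) hImI hprod hεint
    have h2 : (fun ω => I m ω i) * (μ m)[ε m|mI] =ᵐ[μ m] 0 := by
      filter_upwards [hexo m] with ω hω
      simp [Pi.mul_apply, hmI, hω]
    calc ∫ ω, I m ω i * ε m ω ∂(μ m)
        = ∫ ω, ((μ m)[(fun ω => I m ω i) * ε m|mI]) ω ∂(μ m) := by
          rw [integral_condExp hle]; rfl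
      _ = ∫ ω, ((fun ω => I m ω i) * (μ m)[ε m|mI]) ω ∂(μ m) :=
          integral_congr_ae h1
      _ = 0 := by rw [integral_congr_ae h2]; simp
  -- Step 2: covVec (I, Y) = covMat (I, X) * βstar
  have hkey : ∀ m, covVec (μ m) (I m) (Y m) = covMat (μ m) (I m) (X m) *ᵥ βstar := by
    intro m
    funext i
    have hIX : ∀ j, Integrable (fun ω => I m ω i * (X m ω j * βstar j)) (μ m) := by
      intro j
      have h := ((hX2 m j).smul (hI2 m i)
        (p := 2) (q := 2) (r := 1) (hpqr := ⟨by norm_num [ENNReal.inv_two_add_inv_two]⟩)).integrable le_rfl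
      have h' : Integrable (fun ω => I m ω i * X m ω j) (μ m) := by
        simpa [smul_eq_mul, Pi.mul_def] using h
      simpa [mul_assoc] using h'.mul_const (βstar j)
    have hsum : Integrable (fun ω => ∑ j, I m ω i * (X m ω j * βstar j)) (μ m) :=
      integrable_finset_sum _ fun j _ => hIX j
    have hprodε : Integrable (fun ω => I m ω i * ε m ω) (μ m) := by
      have := ((hε2 m).smul (hI2 m i)
        (p := 2) (q := 2) (r := 1) (hpqr := ⟨by norm_num [ENNReal.inv_two_add_inv_two]⟩)).integrable le_rfl
      simpa [smul_eq_mul, Pi.mul_def] using this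
    have : covVec (μ m) (I m) (Y m) i
        = ∫ ω, ((∑ j, I m ω i * (X m ω j * βstar j)) + I m ω i * ε m ω) ∂(μ m) := by
      unfold covVec
      congr 1
      funext ω
      rw [hmodel m ω, mul_add, Finset.mul_sum]
    rw [this, integral_add hsum hprodε, integral_finset_sum _ fun j _ => hIX j, hIε m i,
      add_zero]
    unfold Matrix.mulVec dotProduct covMat
    simp only [Matrix.of_apply]
    congr 1
    funext j
    rw [← integral_mul_const]
    congr 1
    funext ω
    ring
  -- Step 3: rewrite the sequence and pass to the limit
  have hseq : ∀ m : ℕ,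
      (m : ℝ) • ((covMat (μ m) (It m) (Xt m))ᵀ *ᵥ covVec (μ m) (I m) (Y m))
      = ((m : ℝ) • ((covMat (μ m) (It m) (Xt m))ᵀ * covMat (μ m) (It m) (Xt m))) *ᵥ βstar := by
    intro m
    rw [hkey m, ← hcov m, Matrix.mulVec_mulVec, Matrix.smul_mulVec]
  have hcont : Continuous fun M : Matrix (Fin d) (Fin d) ℝ => M *ᵥ βstar := by
    apply continuous_pi
    intro j
    simp only [Matrix.mulVec, dotProduct]
    exact continuous_finset_sum _ fun i _ =>
      (Continuous.matrix_elem continuous_id j i).mul continuous_const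
  refine ⟨Q *ᵥ βstar, ?_, rfl, rfl⟩
  have := (hcont.tendsto Q).comp hQ
  simpa [Function.comp_def, hseq] using this
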